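/- Let E be a Hausdorff topological space equipped with its Borel σ-algebra, and let (p_t)_{t>0} be a Markov semigroup of probability transition kernels on E (i.e. each p_t(x,·) is a probability measure, x ↦ p_t(x,A) is measurable for every Borel set A, and the Chapman–Kolmogorov identity p_{t+s}(x,A) = ∫_E p_s(y,A) p_t(x,dy) holds for all s,t > 0). If (p_t) is irreducible and strong Feller, then there exists at most one invariant probability measure for (p_t). -/

import Mathlib

open MeasureTheory

private lemma ennreal_eq_of_add_eq_add {x x' y y' : ENNReal}
    (h : x + y = x' + y') (hx : x' ≤ x) (hy : y' ≤ y) (hfin : x' + y' ≠ ⊤) : x = x' := by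
  refine le_antisymm ?_ hx
  by_contra hlt
  push_neg at hlt
  have hy' : y' ≠ ⊤ := by intro ht; simp [ht] at hfin
  have h1 : x' + y' < x + y' := ENNReal.add_lt_add_right hy' hlt
  have h2 : x' + y' < x + y := lt_of_lt_of_le h1 (by gcongr)
  exact absurd (h ▸ h2) (lt_irrefl _)

/-- Key lemma: if `η₁` lives on `s`, `η₂` lives on `sᶜ`, and the "cross identity"
holds, then `η₁` is invariant for the kernel `κ`. -/
private lemma invariance_of_part {E : Type*} [MeasurableSpace E]
    (κ : E → Measure E)
    (hκm : ∀ A : Set E, MeasurableSet A → Measurable (fun x => κ x A))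
    (hκp : ∀ x, IsProbabilityMeasure (κ x))
    (η₁ η₂ : Measure E) [IsFiniteMeasure η₁] [IsFiniteMeasure η₂]
    (s : Set E) (hs : MeasurableSet s) (h₁ : η₁ sᶜ = 0) (h₂ : η₂ s = 0)
    (hcross : ∀ A : Set E, MeasurableSet A →
      (∫⁻ x, κ x A ∂η₁) + η₂ A = η₁ A + ∫⁻ x, κ x A ∂η₂) :
    ∀ A : Set E, MeasurableSet A → ∫⁻ x, κ x A ∂η₁ = η₁ A := by
  set a : Set E → ENNReal := fun A => ∫⁻ x, κ x A ∂η₁ with ha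
  set b : Set E → ENNReal := fun A => ∫⁻ x, κ x A ∂η₂ with hb
  have hauniv : a Set.univ = η₁ Set.univ := by
    simp only [ha, measure_univ]; exact lintegral_one
  have hamono : ∀ {A B : Set E}, A ⊆ B → a A ≤ a B := fun hAB =>
    lintegral_mono fun x => measure_mono hAB
  have hafin : ∀ A : Set E, a A ≠ ⊤ := fun A =>
    (lt_of_le_of_lt (le_trans (hamono (Set.subset_univ A)) hauniv.le)
      (measure_lt_top η₁ _)).ne
  -- splitting `a` along a measurable set
  have hasplit : ∀ (A t : Set E), MeasurableSet A → MeasurableSet t →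
      a (A ∩ t) + a (A \ t) = a A := by
    intro A t hA ht
    have hx : ∀ x, κ x (A ∩ t) + κ x (A \ t) = κ x A := fun x =>
      measure_inter_add_diff A ht
    calc a (A ∩ t) + a (A \ t)
        = ∫⁻ x, κ x (A ∩ t) + κ x (A \ t) ∂η₁ := (lintegral_add_left (hκm _ (hA.inter ht)) _).symm
      _ = a A := by simp_rw [hx]; rfl
  have hη₁s : η₁ s = η₁ Set.univ := by
    have := measure_add_measure_compl (μ := η₁) hs
    rw [h₁, add_zero] at this
    exact this
  -- Step 1 : a s = η₁ univ and b s = 0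
  have hcs0 := hcross s hs
  rw [h₂, add_zero, hη₁s] at hcs0
  have hcs : a s = η₁ Set.univ + b s := hcs0
  have hasle : a s ≤ η₁ Set.univ := hauniv ▸ hamono (Set.subset_univ s)
  have hbs0 : b s = 0 := by
    by_contra hne
    have : η₁ Set.univ < η₁ Set.univ + b s :=
      ENNReal.lt_add_right (measure_ne_top _ _) hne
    exact absurd (hcs ▸ hasle) (not_le.mpr this)
  have has : a s = η₁ Set.univ := by rw [hcs, hbs0, add_zero]
  -- Step 2 : a sᶜ = 0
  have hascompl : a sᶜ = 0 := by
    have hsplit := hasplit Set.univ s MeasurableSet.univ hs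
    rw [Set.univ_inter, hauniv, has] at hsplit
    have : η₁ Set.univ + a (Set.univ \ s) = η₁ Set.univ + 0 := by
      rw [add_zero]; exact hsplit
    have h0 : a (Set.univ \ s) = 0 :=
      (ENNReal.add_right_inj (measure_ne_top _ _)).mp this
    rw [Set.compl_eq_univ_diff]
    exact h0
  -- Step 3 : for A ⊆ s measurable, a A = η₁ A
  have hsub : ∀ A : Set E, MeasurableSet A → A ⊆ s → a A = η₁ A := by
    intro A hA hAs
    have hge : ∀ B : Set E, MeasurableSet B → B ⊆ s → η₁ B ≤ a B := by
      intro B hB hBs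
      have hc := hcross B hB
      have hη₂B : η₂ B = 0 := measure_mono_null hBs h₂
      rw [hη₂B, add_zero] at hc
      have hc' : a B = η₁ B + b B := hc
      rw [hc']; exact self_le_add_right _ _
    have hsplitA := hasplit s A hs hA
    rw [Set.inter_eq_self_of_subset_right hAs] at hsplitA
    have hη₁split : η₁ A + η₁ (s \ A) = η₁ s := by
      have := measure_inter_add_diff (μ := η₁) s hA
      rwa [Set.inter_eq_self_of_subset_right hAs] at this
    have heq : a A + a (s \ A) = η₁ A + η₁ (s \ A) := by
      rw [hsplitA, hη₁split, has, hη₁s]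
    exact ennreal_eq_of_add_eq_add heq (hge A hA hAs)
      (hge (s \ A) (hs.diff hA) Set.diff_subset)
      (by rw [hη₁split, hη₁s]; exact measure_ne_top _ _)
  -- Step 4 : general A
  intro A hA
  show a A = η₁ A
  have hsplitA := hasplit A s hA hs
  have hdiff0 : a (A \ s) = 0 := by
    have : a (A \ s) ≤ a sᶜ := hamono (by intro x hx; exact hx.2)
    rw [hascompl] at this
    exact le_antisymm this zero_le
  have hη₁diff : η₁ (A \ s) = 0 :=
    measure_mono_null (fun x hx => hx.2) h₁
  have hη₁A : η₁ (A ∩ s) = η₁ A := by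
    have := measure_inter_add_diff (μ := η₁) A hs
    rwa [hη₁diff, add_zero] at this
  rw [hdiff0, add_zero] at hsplitA
  rw [← hsplitA, hsub (A ∩ s) (hA.inter hs) Set.inter_subset_right, hη₁A]

theorem uniqueness_of_invariant_measure
    {E : Type*} [TopologicalSpace E] [T2Space E] [MeasurableSpace E] [BorelSpace E]
    (p : ℝ → E → Measure E)
    -- each `p t x` is a probability measure
    (hprob : ∀ t > (0 : ℝ), ∀ x : E, IsProbabilityMeasure (p t x))
    -- measurability in the space variable
    (hmeas : ∀ t > (0 : ℝ), ∀ A : Set E, MeasurableSet A →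
      Measurable (fun x => p t x A))
    -- Chapman–Kolmogorov identity
    (hCK : ∀ s > (0 : ℝ), ∀ t > (0 : ℝ), ∀ (x : E) (A : Set E), MeasurableSet A →
      p (t + s) x A = ∫⁻ y, p s y A ∂(p t x))
    -- irreducibility
    (hirr : ∀ t > (0 : ℝ), ∀ x : E, ∀ U : Set E, IsOpen U → U.Nonempty →
      0 < p t x U)
    -- strong Feller property
    (hSF : ∀ t > (0 : ℝ), ∀ A : Set E, MeasurableSet A →
      Continuous (fun x => p t x A)) :
    ∀ μ ν : Measure E,
      (IsProbabilityMeasure μ ∧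
        ∀ t > (0 : ℝ), ∀ A : Set E, MeasurableSet A → ∫⁻ x, p t x A ∂μ = μ A) →
      (IsProbabilityMeasure ν ∧
        ∀ t > (0 : ℝ), ∀ A : Set E, MeasurableSet A → ∫⁻ x, p t x A ∂ν = ν A) →
      μ = ν := by
  intro μ ν ⟨hμp, hμinv⟩ ⟨hνp, hνinv⟩
  by_contra hne
  -- the kernel at time 1
  set κ : E → Measure E := p 1 with hκ
  have one_pos : (0:ℝ) < 1 := one_pos
  have hκm : ∀ A : Set E, MeasurableSet A → Measurable (fun x => κ x A) :=
    fun A hA => hmeas 1 one_pos A hA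
  have hκp : ∀ x, IsProbabilityMeasure (κ x) := hprob 1 one_pos
  -- Hahn decomposition of μ - ν
  obtain ⟨s, hs, hνμ, hμν⟩ := hahn_decomposition (μ := μ) (ν := ν)
  -- positive and negative parts
  set η₁ : Measure E := μ.restrict s - ν.restrict s with hη₁def
  set η₂ : Measure E := ν.restrict sᶜ - μ.restrict sᶜ with hη₂def
  have hle₁ : ν.restrict s ≤ μ.restrict s := by
    refine Measure.le_iff.mpr fun A hA => ?_
    rw [Measure.restrict_apply hA, Measure.restrict_apply hA]
    exact hνμ _ (hA.inter hs) Set.inter_subset_right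
  have hle₂ : μ.restrict sᶜ ≤ ν.restrict sᶜ := by
    refine Measure.le_iff.mpr fun A hA => ?_
    rw [Measure.restrict_apply hA, Measure.restrict_apply hA]
    exact hμν _ (hA.inter hs.compl) Set.inter_subset_right
  have hη₁app : ∀ A : Set E, MeasurableSet A → η₁ A = μ (A ∩ s) - ν (A ∩ s) := by
    intro A hA
    rw [hη₁def, Measure.sub_apply hA hle₁, Measure.restrict_apply hA,
      Measure.restrict_apply hA]
  have hη₂app : ∀ A : Set E, MeasurableSet A → η₂ A = ν (A ∩ sᶜ) - μ (A ∩ sᶜ) := by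
    intro A hA
    rw [hη₂def, Measure.sub_apply hA hle₂, Measure.restrict_apply hA,
      Measure.restrict_apply hA]
  -- the common part ρ
  set ρ : Measure E := ν.restrict s + μ.restrict sᶜ with hρdef
  have hμdecomp : μ = η₁ + ρ := by
    ext A hA
    rw [Measure.add_apply, hρdef, Measure.add_apply, hη₁app A hA,
      Measure.restrict_apply hA, Measure.restrict_apply hA]
    have h1 : ν (A ∩ s) ≤ μ (A ∩ s) := hνμ _ (hA.inter hs) Set.inter_subset_right
    rw [← add_assoc, tsub_add_cancel_of_le h1, ← Set.diff_eq]
    exact (measure_inter_add_diff A hs).symm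
  have hνdecomp : ν = η₂ + ρ := by
    ext A hA
    rw [Measure.add_apply, hρdef, Measure.add_apply, hη₂app A hA]
    rw [Measure.restrict_apply hA, Measure.restrict_apply hA]
    have h1 : μ (A ∩ sᶜ) ≤ ν (A ∩ sᶜ) := hμν _ (hA.inter hs.compl) Set.inter_subset_right
    rw [add_comm (ν (A ∩ s)) (μ (A ∩ sᶜ)), ← add_assoc, tsub_add_cancel_of_le h1,
      ← Set.diff_eq, add_comm]
    exact (measure_inter_add_diff A hs).symm
  -- finiteness
  have hη₁le : η₁ ≤ μ := hμdecomp ▸ Measure.le_add_right le_rfl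
  have hη₂le : η₂ ≤ ν := hνdecomp ▸ Measure.le_add_right le_rfl
  haveI : IsFiniteMeasure η₁ := isFiniteMeasure_of_le μ hη₁le
  haveI : IsFiniteMeasure η₂ := isFiniteMeasure_of_le ν hη₂le
  haveI : IsFiniteMeasure ρ := by
    rw [hρdef]; infer_instance
  -- η₁ lives on s, η₂ lives on sᶜ
  have hη₁c : η₁ sᶜ = 0 := by
    rw [hη₁app sᶜ hs.compl]
    simp
  have hη₂s : η₂ s = 0 := by
    rw [hη₂app s hs]
    simp
  -- the cross identity
  have hcross : ∀ A : Set E, MeasurableSet A →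
      (∫⁻ x, κ x A ∂η₁) + η₂ A = η₁ A + ∫⁻ x, κ x A ∂η₂ := by
    intro A hA
    have hfin : ∀ (σ : Measure E) [IsFiniteMeasure σ], ∫⁻ x, κ x A ∂σ ≠ ⊤ := by
      intro σ _
      have : ∫⁻ x, κ x A ∂σ ≤ ∫⁻ _, 1 ∂σ :=
        lintegral_mono fun x => prob_le_one
      rw [lintegral_one] at this
      exact (lt_of_le_of_lt this (measure_lt_top σ _)).ne
    have e1 : (∫⁻ x, κ x A ∂η₁) + ∫⁻ x, κ x A ∂ρ = η₁ A + ρ A := by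
      have h := hμinv 1 one_pos A hA
      rw [hμdecomp, lintegral_add_measure, Measure.add_apply] at h
      exact h
    have e2 : (∫⁻ x, κ x A ∂η₂) + ∫⁻ x, κ x A ∂ρ = η₂ A + ρ A := by
      have h := hνinv 1 one_pos A hA
      rw [hνdecomp, lintegral_add_measure, Measure.add_apply] at h
      exact h
    have key : (∫⁻ x, κ x A ∂η₁) + η₂ A + (∫⁻ x, κ x A ∂ρ + ρ A)
        = (η₁ A + ∫⁻ x, κ x A ∂η₂) + (∫⁻ x, κ x A ∂ρ + ρ A) := by
      calc (∫⁻ x, κ x A ∂η₁) + η₂ A + (∫⁻ x, κ x A ∂ρ + ρ A)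
          = ((∫⁻ x, κ x A ∂η₁) + ∫⁻ x, κ x A ∂ρ) + (η₂ A + ρ A) := by ring
        _ = (η₁ A + ρ A) + ((∫⁻ x, κ x A ∂η₂) + ∫⁻ x, κ x A ∂ρ) := by rw [e1, e2]
        _ = (η₁ A + ∫⁻ x, κ x A ∂η₂) + (∫⁻ x, κ x A ∂ρ + ρ A) := by ring
    have hfin2 : (∫⁻ x, κ x A ∂ρ) + ρ A ≠ ⊤ :=
      ENNReal.add_ne_top.mpr ⟨hfin ρ, measure_ne_top _ _⟩
    exact WithTop.add_right_cancel hfin2 key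
  have hcross' : ∀ A : Set E, MeasurableSet A →
      (∫⁻ x, κ x A ∂η₂) + η₁ A = η₂ A + ∫⁻ x, κ x A ∂η₁ := by
    intro A hA
    have h := hcross A hA
    calc (∫⁻ x, κ x A ∂η₂) + η₁ A = η₁ A + ∫⁻ x, κ x A ∂η₂ := add_comm _ _
      _ = (∫⁻ x, κ x A ∂η₁) + η₂ A := h.symm
      _ = η₂ A + ∫⁻ x, κ x A ∂η₁ := add_comm _ _
  -- invariance of the two parts
  have hinv₁ : ∀ A : Set E, MeasurableSet A → ∫⁻ x, κ x A ∂η₁ = η₁ A :=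
    invariance_of_part κ hκm hκp η₁ η₂ s hs hη₁c hη₂s hcross
  have hinv₂ : ∀ A : Set E, MeasurableSet A → ∫⁻ x, κ x A ∂η₂ = η₂ A := by
    refine invariance_of_part κ hκm hκp η₂ η₁ sᶜ hs.compl ?_ ?_ ?_
    · rwa [compl_compl]
    · exact hη₁c
    · exact hcross'
  -- both parts are nonzero (since μ ≠ ν)
  have hη₁ne : η₁ Set.univ ≠ 0 := by
    intro h0
    apply hne
    -- μ ≤ ν everywhere
    have hles : ∀ A : Set E, MeasurableSet A → μ A ≤ ν A := by
      intro A hA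
      have h1 : η₁ (A ∩ s) = 0 := measure_mono_null (Set.subset_univ _) h0
      rw [hη₁app (A ∩ s) (hA.inter hs), Set.inter_assoc, Set.inter_self] at h1
      have hμs : μ (A ∩ s) ≤ ν (A ∩ s) := by
        have := tsub_eq_zero_iff_le.mp h1
        exact this
      have hμc : μ (A ∩ sᶜ) ≤ ν (A ∩ sᶜ) :=
        hμν _ (hA.inter hs.compl) Set.inter_subset_right
      calc μ A = μ (A ∩ s) + μ (A \ s) := (measure_inter_add_diff A hs).symm
        _ ≤ ν (A ∩ s) + ν (A \ s) := by
            rw [Set.diff_eq]; exact add_le_add hμs hμc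
        _ = ν A := measure_inter_add_diff A hs
    ext A hA
    refine le_antisymm (hles A hA) ?_
    by_contra hlt
    push_neg at hlt
    have h1 : μ A + μ Aᶜ = ν A + ν Aᶜ := by
      rw [measure_add_measure_compl hA, measure_add_measure_compl hA,
        measure_univ, measure_univ]
    have h2 : ν A + ν Aᶜ ≤ μ A + ν Aᶜ := by
      rw [← h1]; exact add_le_add le_rfl (hles Aᶜ hA.compl)
    have h3 : ν A ≤ μ A := ENNReal.le_of_add_le_add_right (measure_ne_top ν Aᶜ) h2
    exact absurd h3 (not_le.mpr hlt)
  have hη₂ne : η₂ Set.univ ≠ 0 := by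
    intro h0
    apply hne
    have hles : ∀ A : Set E, MeasurableSet A → ν A ≤ μ A := by
      intro A hA
      have h1 : η₂ (A ∩ sᶜ) = 0 := measure_mono_null (Set.subset_univ _) h0
      rw [hη₂app (A ∩ sᶜ) (hA.inter hs.compl), Set.inter_assoc, Set.inter_self] at h1
      have hνc : ν (A ∩ sᶜ) ≤ μ (A ∩ sᶜ) := tsub_eq_zero_iff_le.mp h1
      have hνs : ν (A ∩ s) ≤ μ (A ∩ s) :=
        hνμ _ (hA.inter hs) Set.inter_subset_right
      calc ν A = ν (A ∩ s) + ν (A \ s) := (measure_inter_add_diff A hs).symm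
        _ ≤ μ (A ∩ s) + μ (A \ s) := by
            rw [Set.diff_eq]; exact add_le_add hνs hνc
        _ = μ A := measure_inter_add_diff A hs
    ext A hA
    refine le_antisymm ?_ (hles A hA)
    by_contra hlt
    push_neg at hlt
    have h1 : μ A + μ Aᶜ = ν A + ν Aᶜ := by
      rw [measure_add_measure_compl hA, measure_add_measure_compl hA,
        measure_univ, measure_univ]
    have h2 : μ A + μ Aᶜ ≤ ν A + μ Aᶜ := by
      rw [h1]; exact add_le_add le_rfl (hles Aᶜ hA.compl)
    have h3 : μ A ≤ ν A := ENNReal.le_of_add_le_add_right (measure_ne_top μ Aᶜ) h2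
    exact absurd h3 (not_le.mpr hlt)
  -- the strong Feller function f = p 1 · s
  set f : E → ENNReal := fun x => κ x s with hf
  have hfc : Continuous f := hSF 1 one_pos s hs
  have hfm : Measurable f := hκm s hs
  have hfle : ∀ x, f x ≤ 1 := fun x => prob_le_one
  -- f = 1 a.e. [η₁]
  have hη₁s : η₁ s = η₁ Set.univ := by
    have := measure_add_measure_compl (μ := η₁) hs
    rw [hη₁c, add_zero] at this
    exact this
  have hintf₁ : ∫⁻ x, f x ∂η₁ = η₁ Set.univ := (hinv₁ s hs).trans hη₁s
  have hae₁ : ∀ᵐ x ∂η₁, f x = 1 := by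
    have hsub : ∫⁻ x, (1 : ENNReal) - f x ∂η₁ = 0 := by
      rw [lintegral_sub hfm (by rw [hintf₁]; exact measure_ne_top _ _)
        (Filter.Eventually.of_forall hfle), lintegral_one, hintf₁, tsub_self]
    have := (lintegral_eq_zero_iff ((measurable_const.sub hfm))).mp hsub
    filter_upwards [this] with x hx
    simp only [Pi.zero_apply] at hx
    have h1 : (1 : ENNReal) ≤ f x := tsub_eq_zero_iff_le.mp hx
    exact le_antisymm (hfle x) h1
  -- f = 0 a.e. [η₂]
  have hintf₂ : ∫⁻ x, f x ∂η₂ = 0 := (hinv₂ s hs).trans hη₂s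
  have hae₂ : ∀ᵐ x ∂η₂, f x = 0 := by
    have := (lintegral_eq_zero_iff hfm).mp hintf₂
    filter_upwards [this] with x hx
    exact hx
  -- the open set U
  set U : Set E := f ⁻¹' Set.Ioi (1/2 : ENNReal) with hU
  have hUopen : IsOpen U := hfc.isOpen_preimage _ isOpen_Ioi
  have hUmeas : MeasurableSet U := hUopen.measurableSet
  -- U is nonempty
  have hη₁U : η₁ Uᶜ = 0 := by
    have hsubset : ∀ᵐ x ∂η₁, x ∈ U := by
      filter_upwards [hae₁] with x hx
      show (1/2 : ENNReal) < f x
      rw [hx]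
      exact ENNReal.half_lt_self one_ne_zero ENNReal.one_ne_top
    exact (MeasureTheory.ae_iff.mp hsubset)
  have hUne : U.Nonempty := by
    rw [Set.nonempty_iff_ne_empty]
    intro hempty
    have : η₁ Uᶜ = η₁ Set.univ := by rw [hempty, Set.compl_empty]
    rw [hη₁U] at this
    exact hη₁ne this.symm
  -- contradiction via irreducibility
  have hη₂U0 : η₂ U = 0 := by
    have hsubset : ∀ᵐ x ∂η₂, x ∉ U := by
      filter_upwards [hae₂] with x hx
      show ¬ (1/2 : ENNReal) < f x
      rw [hx]
      simp
    exact measure_mono_null (fun x hx => not_not.mpr hx) (MeasureTheory.ae_iff.mp hsubset)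
  have hη₂Upos : 0 < η₂ U := by
    rw [← hinv₂ U hUmeas]
    rw [lintegral_pos_iff_support (hκm U hUmeas)]
    have hsupp : Function.support (fun x => κ x U) = Set.univ := by
      ext x
      simp only [Function.mem_support, Set.mem_univ, iff_true]
      exact (hirr 1 one_pos x U hUopen hUne).ne'
    rw [hsupp]
    exact lt_of_le_of_ne zero_le (Ne.symm (by simpa using hη₂ne))
  rw [hη₂U0] at hη₂Upos
  exact lt_irrefl _ hη₂Upos
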